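/- Let k be a field, Q = k[x,y,z,w], a ∈ k, and J = (x², xz, xw, yz+a²z²−azw−w², yw−aw²). Then the sequence x², yz+a²z²−azw−w², yw−aw² is a regular sequence in Q; in particular grade(J) ≥ 3. -/

import Mathlib

open MvPolynomial

section Aux

variable {k : Type*} [Field k] (a : k)

/-- `X 0` is prime in a multivariate polynomial ring over a field. -/
lemma aux_prime_X0 (n : ℕ) : Prime (X 0 : MvPolynomial (Fin (n + 1)) k) := by
  have h := MulEquiv.prime_iff (finSuccEquiv k n).toMulEquiv
    (p := (X 0 : MvPolynomial (Fin (n + 1)) k))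
  rw [← h]
  show Prime ((finSuccEquiv k n) (X 0))
  rw [finSuccEquiv_X_zero]
  exact Polynomial.prime_X

lemma aux_X0_not_dvd_X1 : ¬ (X 0 : MvPolynomial (Fin 2) k) ∣ X 1 := by
  rintro ⟨c, hc⟩
  apply_fun (aeval (![0, Polynomial.X] : Fin 2 → Polynomial k)) at hc
  simp only [aeval_X, map_mul, Matrix.cons_val_zero, Matrix.cons_val_one, Matrix.head_cons,
    zero_mul] at hc
  exact Polynomial.X_ne_zero hc

noncomputable abbrev auxc₀ : MvPolynomial (Fin 2) k :=
  X 1 * X 0 + C a ^ 2 * X 0 ^ 2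

noncomputable abbrev auxc₁ : MvPolynomial (Fin 2) k := -(C a * X 0)

noncomputable abbrev auxF : Polynomial (MvPolynomial (Fin 2) k) :=
  Polynomial.C (auxc₀ a) + Polynomial.C (auxc₁ a) * Polynomial.X - Polynomial.X ^ 2

lemma aux_coeff0 {R : Type*} [CommRing R] (c₀ c₁ : R) :
    (Polynomial.C c₀ + Polynomial.C c₁ * Polynomial.X - Polynomial.X ^ 2).coeff 0 = c₀ := by
  simp

lemma aux_coeff1 {R : Type*} [CommRing R] (c₀ c₁ : R) :
    (Polynomial.C c₀ + Polynomial.C c₁ * Polynomial.X - Polynomial.X ^ 2).coeff 1 = c₁ := by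
  simp

lemma aux_coeff2 {R : Type*} [CommRing R] (c₀ c₁ : R) :
    (Polynomial.C c₀ + Polynomial.C c₁ * Polynomial.X - Polynomial.X ^ 2).coeff 2 = -1 := by
  simp

lemma auxF_natDegree : (auxF a).natDegree = 2 := by
  show (Polynomial.C (auxc₀ a) + Polynomial.C (auxc₁ a) * Polynomial.X
    - Polynomial.X ^ 2).natDegree = 2
  compute_degree!

lemma auxF_ne_zero : auxF a ≠ 0 := by
  intro h
  have := auxF_natDegree a
  rw [h] at this
  simp at this

lemma auxF_coeff2 : (auxF a).coeff 2 = -1 := aux_coeff2 _ _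

lemma auxF_leadingCoeff : (auxF a).leadingCoeff = -1 := by
  rw [Polynomial.leadingCoeff, auxF_natDegree, auxF_coeff2]

lemma auxF_degree : (auxF a).degree = 2 := by
  rw [Polynomial.degree_eq_natDegree (auxF_ne_zero a), auxF_natDegree]
  rfl

lemma auxF_irreducible : Irreducible (auxF a) := by
  have hZ : Prime (X 0 : MvPolynomial (Fin 2) k) := aux_prime_X0 1
  have hP : (Ideal.span {(X 0 : MvPolynomial (Fin 2) k)}).IsPrime :=
    (Ideal.span_singleton_prime (MvPolynomial.X_ne_zero 0)).mpr hZ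
  refine Polynomial.irreducible_of_eisenstein_criterion hP ?_ ?_ ?_ ?_ ?_
  · -- leading coefficient not in P
    rw [auxF_leadingCoeff]
    intro hmem
    have h1 : (1 : MvPolynomial (Fin 2) k) ∈ Ideal.span {(X 0 : MvPolynomial (Fin 2) k)} :=
      (Ideal.neg_mem_iff _).mp hmem
    exact hP.ne_top ((Ideal.eq_top_iff_one _).mpr h1)
  · -- lower coefficients in P
    intro n hn
    rw [auxF_degree] at hn
    have hn2 : n < 2 := by exact_mod_cast hn
    interval_cases n
    · rw [show (auxF a).coeff 0 = auxc₀ a from aux_coeff0 _ _]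
      exact Ideal.mem_span_singleton.mpr ⟨X 1 + C a ^ 2 * X 0, by unfold auxc₀; ring⟩
    · rw [show (auxF a).coeff 1 = auxc₁ a from aux_coeff1 _ _]
      exact Ideal.mem_span_singleton.mpr ⟨-C a, by unfold auxc₁; ring⟩
  · rw [auxF_degree]
    decide
  · -- coeff 0 not in P^2
    rw [show (auxF a).coeff 0 = auxc₀ a from aux_coeff0 _ _, Ideal.span_singleton_pow, Ideal.mem_span_singleton]
    rintro ⟨d, hd⟩
    apply aux_X0_not_dvd_X1 (k := k)
    have hcancel : X 1 * X 0 = (X 0 * d - C a ^ 2 * X 0) * X 0 := by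
      unfold auxc₀ at hd
      linear_combination hd
    have := mul_right_cancel₀ (MvPolynomial.X_ne_zero 0) hcancel
    exact ⟨d - C a ^ 2, by linear_combination this⟩
  · -- primitive
    intro r hr
    have hdvd : r ∣ (auxF a).coeff 2 := (Polynomial.C_dvd_iff_dvd_coeff r _).mp hr 2
    rw [auxF_coeff2] at hdvd
    exact isUnit_of_dvd_unit hdvd isUnit_one.neg

lemma auxF_prime : Prime (auxF a) :=
  UniqueFactorizationMonoid.irreducible_iff_prime.mp (auxF_irreducible a)

/-- The second splitting equivalence: variable `2` of `Fin 3` becomes `Polynomial.X`. -/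
noncomputable abbrev auxe₂ :
    MvPolynomial (Fin 3) k ≃ₐ[k] Polynomial (MvPolynomial (Fin 2) k) :=
  (renameEquiv k (Equiv.swap (0 : Fin 3) 2)).trans (finSuccEquiv k 2)

lemma auxe₂_X0 : auxe₂ (X 0 : MvPolynomial (Fin 3) k) = Polynomial.C (X 1) := by
  show (finSuccEquiv k 2) (rename (Equiv.swap (0 : Fin 3) 2) (X 0)) = _
  rw [rename_X]
  have h1 : (Equiv.swap (0 : Fin 3) 2) 0 = 2 := by decide
  rw [h1]
  have h2 : (2 : Fin 3) = Fin.succ 1 := rfl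
  rw [h2, finSuccEquiv_X_succ]

lemma auxe₂_X1 : auxe₂ (X 1 : MvPolynomial (Fin 3) k) = Polynomial.C (X 0) := by
  show (finSuccEquiv k 2) (rename (Equiv.swap (0 : Fin 3) 2) (X 1)) = _
  rw [rename_X]
  have h1 : (Equiv.swap (0 : Fin 3) 2) 1 = 1 := by decide
  rw [h1]
  have h2 : (1 : Fin 3) = Fin.succ 0 := rfl
  rw [h2, finSuccEquiv_X_succ]

lemma auxe₂_X2 : auxe₂ (X 2 : MvPolynomial (Fin 3) k) = Polynomial.X := by
  show (finSuccEquiv k 2) (rename (Equiv.swap (0 : Fin 3) 2) (X 2)) = _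
  rw [rename_X]
  have h1 : (Equiv.swap (0 : Fin 3) 2) 2 = 0 := by decide
  rw [h1, finSuccEquiv_X_zero]

lemma auxe₂_C (b : k) : auxe₂ (C b : MvPolynomial (Fin 3) k) = Polynomial.C (C b) := by
  show (finSuccEquiv k 2) (rename (Equiv.swap (0 : Fin 3) 2) (C b)) = _
  rw [rename_C]
  simp [finSuccEquiv_apply]

/-- `t₁` in `k[y,z,w]` (variables `0,1,2`). -/
noncomputable abbrev auxt₁ : MvPolynomial (Fin 3) k :=
  X 0 * X 1 + C a ^ 2 * X 1 ^ 2 - C a * X 1 * X 2 - X 2 ^ 2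

noncomputable abbrev auxt₂ : MvPolynomial (Fin 3) k := X 0 * X 2 - C a * X 2 ^ 2

lemma auxe₂_t₁ : auxe₂ (auxt₁ a) = auxF a := by
  unfold auxt₁ auxF auxc₀ auxc₁
  simp only [map_sub, map_add, map_mul, map_pow, auxe₂_X0, auxe₂_X1, auxe₂_X2, auxe₂_C,
    map_neg]
  ring

lemma auxt₁_prime : Prime (auxt₁ a) := by
  rw [← MulEquiv.prime_iff (auxe₂ (k := k)).toMulEquiv]
  show Prime (auxe₂ (auxt₁ a))
  rw [auxe₂_t₁]
  exact auxF_prime a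

lemma auxt₁_not_dvd_t₂ : ¬ auxt₁ a ∣ auxt₂ a := by
  intro h
  have hfactor : auxt₂ a = X 2 * (X 0 - C a * X 2) := by unfold auxt₂; ring
  rw [hfactor] at h
  rcases (auxt₁_prime a).dvd_mul.mp h with h' | h'
  · have hd : auxF a ∣ Polynomial.X := by
      have := map_dvd (auxe₂ (k := k)) h'
      rwa [auxe₂_t₁, auxe₂_X2] at this
    have hle := Polynomial.natDegree_le_of_dvd hd Polynomial.X_ne_zero
    rw [auxF_natDegree, Polynomial.natDegree_X] at hle
    omega
  · have hd : auxF a ∣ Polynomial.C (X 1) - Polynomial.C (C a) * Polynomial.X := by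
      have := map_dvd (auxe₂ (k := k)) h'
      rwa [auxe₂_t₁, map_sub, map_mul, auxe₂_X0, auxe₂_X2, auxe₂_C] at this
    have hne : (Polynomial.C (X 1 : MvPolynomial (Fin 2) k)
        - Polynomial.C (C a) * Polynomial.X) ≠ 0 := by
      intro h0
      have := congrArg (fun p => Polynomial.coeff p 0) h0
      simp only [Polynomial.coeff_sub, Polynomial.coeff_C_zero, Polynomial.coeff_C_mul,
        Polynomial.coeff_X_zero, mul_zero, sub_zero, Polynomial.coeff_zero] at this
      exact MvPolynomial.X_ne_zero 1 this
    have hle := Polynomial.natDegree_le_of_dvd hd hne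
    rw [auxF_natDegree] at hle
    have hdle : (Polynomial.C (X 1 : MvPolynomial (Fin 2) k)
        - Polynomial.C (C a) * Polynomial.X).natDegree ≤ 1 := by compute_degree
    omega

/-- Transfer of two-generator span membership along a ring equivalence. -/
lemma aux_mem_span_pair_equiv {Q S : Type*} [CommRing Q] [CommRing S] (e : Q ≃+* S)
    {A B f : Q} : f ∈ Ideal.span {A, B} ↔ e f ∈ Ideal.span {e A, e B} := by
  rw [Ideal.mem_span_pair, Ideal.mem_span_pair]
  constructor
  · rintro ⟨u, v, h⟩
    exact ⟨e u, e v, by rw [← map_mul, ← map_mul, ← map_add, h]⟩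
  · rintro ⟨u, v, h⟩
    refine ⟨e.symm u, e.symm v, e.injective ?_⟩
    rw [map_add, map_mul, map_mul, e.apply_symm_apply, e.apply_symm_apply, h]

/-- Characterization of membership in `(X², C t₁)` in `R[X]`. -/
lemma aux_span_char {R : Type*} [CommRing R] (t : R) (g : Polynomial R) :
    g ∈ Ideal.span {(Polynomial.X : Polynomial R) ^ 2, Polynomial.C t} ↔
      t ∣ g.coeff 0 ∧ t ∣ g.coeff 1 := by
  rw [Ideal.mem_span_pair]
  constructor
  · rintro ⟨u, v, rfl⟩
    constructor
    · exact ⟨v.coeff 0, by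
        simp [Polynomial.coeff_mul_X_pow', Polynomial.coeff_mul_C, mul_comm]⟩
    · exact ⟨v.coeff 1, by
        simp [Polynomial.coeff_mul_X_pow', Polynomial.coeff_mul_C, mul_comm]⟩
  · rintro ⟨⟨d₀, h₀⟩, ⟨d₁, h₁⟩⟩
    have hX : (Polynomial.X : Polynomial R) ^ 2 ∣
        g - Polynomial.C (g.coeff 0) - Polynomial.C (g.coeff 1) * Polynomial.X := by
      rw [Polynomial.X_pow_dvd_iff]
      intro d hd
      interval_cases d <;> simp
    obtain ⟨u, hu⟩ := hX
    refine ⟨u, Polynomial.C d₀ + Polynomial.C d₁ * Polynomial.X, ?_⟩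
    have : g = Polynomial.X ^ 2 * u
        + (Polynomial.C (g.coeff 0) + Polynomial.C (g.coeff 1) * Polynomial.X) := by
      rw [← hu]; ring
    rw [this, h₀, h₁]
    simp only [map_mul]
    ring

end Aux

section Main

variable {k : Type*} [Field k] (a : k)

noncomputable abbrev auxe : MvPolynomial (Fin 4) k ≃ₐ[k]
    Polynomial (MvPolynomial (Fin 3) k) := finSuccEquiv k 3

lemma auxe_X1 : auxe (X 1 : MvPolynomial (Fin 4) k) = Polynomial.C (X 0) := by
  have h : (1 : Fin 4) = Fin.succ 0 := rfl
  rw [show (auxe (X 1 : MvPolynomial (Fin 4) k)) = finSuccEquiv k 3 (X 1) from rfl, h,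
    finSuccEquiv_X_succ]

lemma auxe_X2 : auxe (X 2 : MvPolynomial (Fin 4) k) = Polynomial.C (X 1) := by
  have h : (2 : Fin 4) = Fin.succ 1 := rfl
  rw [show (auxe (X 2 : MvPolynomial (Fin 4) k)) = finSuccEquiv k 3 (X 2) from rfl, h,
    finSuccEquiv_X_succ]

lemma auxe_X3 : auxe (X 3 : MvPolynomial (Fin 4) k) = Polynomial.C (X 2) := by
  have h : (3 : Fin 4) = Fin.succ 2 := rfl
  rw [show (auxe (X 3 : MvPolynomial (Fin 4) k)) = finSuccEquiv k 3 (X 3) from rfl, h,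
    finSuccEquiv_X_succ]

lemma auxe_X0 : auxe (X 0 : MvPolynomial (Fin 4) k) = Polynomial.X :=
  finSuccEquiv_X_zero

lemma auxe_C (b : k) : auxe (C b : MvPolynomial (Fin 4) k) = Polynomial.C (C b) := by
  simp [finSuccEquiv_apply]

noncomputable abbrev auxT₁ : MvPolynomial (Fin 4) k :=
  X 1 * X 2 + C a ^ 2 * X 2 ^ 2 - C a * X 2 * X 3 - X 3 ^ 2

noncomputable abbrev auxT₂ : MvPolynomial (Fin 4) k := X 1 * X 3 - C a * X 3 ^ 2

lemma auxe_T₁ : auxe (auxT₁ a) = Polynomial.C (auxt₁ a) := by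
  unfold auxT₁ auxt₁
  simp only [map_sub, map_add, map_mul, map_pow, auxe_X1, auxe_X2, auxe_X3, auxe_C]

lemma auxe_T₂ : auxe (auxT₂ a) = Polynomial.C (auxt₂ a) := by
  unfold auxT₂ auxt₂
  simp only [map_sub, map_add, map_mul, map_pow, auxe_X1, auxe_X3, auxe_C]

lemma aux_step1 (f : MvPolynomial (Fin 4) k)
    (hf : (X 0 : MvPolynomial (Fin 4) k) ^ 2 * f = 0) : f = 0 := by
  rcases mul_eq_zero.mp hf with h | h
  · exact absurd h (pow_ne_zero 2 (MvPolynomial.X_ne_zero 0))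
  · exact h

lemma aux_step2 (f : MvPolynomial (Fin 4) k)
    (hf : auxT₁ a * f ∈ Ideal.span {(X 0 : MvPolynomial (Fin 4) k) ^ 2}) :
    f ∈ Ideal.span {(X 0 : MvPolynomial (Fin 4) k) ^ 2} := by
  rw [Ideal.mem_span_singleton] at hf ⊢
  have hd : (Polynomial.X : Polynomial (MvPolynomial (Fin 3) k)) ^ 2 ∣
      Polynomial.C (auxt₁ a) * auxe f := by
    have := map_dvd (auxe (k := k)) hf
    rwa [map_mul, map_pow, auxe_X0, auxe_T₁] at this
  rw [Polynomial.X_pow_dvd_iff] at hd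
  have hd' : (Polynomial.X : Polynomial (MvPolynomial (Fin 3) k)) ^ 2 ∣ auxe f := by
    rw [Polynomial.X_pow_dvd_iff]
    intro d hdlt
    have := hd d hdlt
    rw [Polynomial.coeff_C_mul] at this
    rcases mul_eq_zero.mp this with h | h
    · exact absurd h (auxt₁_prime a).ne_zero
    · exact h
  have := map_dvd (auxe (k := k)).symm hd'
  rwa [map_pow, AlgEquiv.symm_apply_apply, show (auxe (k := k)).symm Polynomial.X = X 0 by
    rw [← auxe_X0, AlgEquiv.symm_apply_apply]] at this

lemma aux_step3 (f : MvPolynomial (Fin 4) k)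
    (hf : auxT₂ a * f ∈ Ideal.span {(X 0 : MvPolynomial (Fin 4) k) ^ 2, auxT₁ a}) :
    f ∈ Ideal.span {(X 0 : MvPolynomial (Fin 4) k) ^ 2, auxT₁ a} := by
  rw [aux_mem_span_pair_equiv (auxe (k := k)).toRingEquiv] at hf ⊢
  have heq : (auxe (k := k)) ((X 0 : MvPolynomial (Fin 4) k) ^ 2) = Polynomial.X ^ 2 := by
    rw [map_pow, auxe_X0]
  rw [show ((auxe (k := k)).toRingEquiv : MvPolynomial (Fin 4) k →
    Polynomial (MvPolynomial (Fin 3) k)) = auxe (k := k) from rfl] at hf ⊢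
  rw [heq, auxe_T₁] at hf ⊢
  rw [map_mul, auxe_T₂] at hf
  rw [aux_span_char] at hf ⊢
  have key : ∀ i : ℕ, auxt₁ a ∣ (Polynomial.C (auxt₂ a) * auxe f).coeff i →
      auxt₁ a ∣ (auxe f).coeff i := by
    intro i hi
    rw [Polynomial.coeff_C_mul] at hi
    rcases (auxt₁_prime a).dvd_mul.mp hi with h | h
    · exact absurd h (auxt₁_not_dvd_t₂ a)
    · exact h
  exact ⟨key 0 hf.1, key 1 hf.2⟩

end Main

/-- `x², yz+a²z²−azw−w², yw−aw²` is a regular sequence in `Q = k[x,y,z,w]`;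
in particular `J` contains a regular sequence of length three, so `grade J ≥ 3`. -/
theorem stmt_9 (k : Type*) [Field k] (a : k) :
    let x : MvPolynomial (Fin 4) k := X 0
    let y : MvPolynomial (Fin 4) k := X 1
    let z : MvPolynomial (Fin 4) k := X 2
    let w : MvPolynomial (Fin 4) k := X 3
    let T₁ := y * z + C a ^ 2 * z ^ 2 - C a * z * w - w ^ 2
    let T₂ := y * w - C a * w ^ 2
    let J : Ideal (MvPolynomial (Fin 4) k) :=
      Ideal.span {x ^ 2, x * z, x * w, T₁, T₂}
    RingTheory.Sequence.IsRegular (MvPolynomial (Fin 4) k) [x ^ 2, T₁, T₂] ∧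
      ∀ r ∈ [x ^ 2, T₁, T₂], r ∈ J := by
  intro x y z w T₁ T₂ J
  constructor
  · rw [RingTheory.Sequence.isRegular_iff]
    constructor
    · refine ⟨?_⟩
      intro i hi
      simp only [List.length_cons, List.length_nil] at hi
      interval_cases i
      · -- i = 0
        rw [isSMulRegular_quotient_iff_mem_of_smul_mem]
        intro f hf
        have hN : (Ideal.ofList (List.take 0 [x ^ 2, T₁, T₂]) •
            (⊤ : Submodule (MvPolynomial (Fin 4) k) (MvPolynomial (Fin 4) k)))
            = ⊥ := by
          simp
        rw [hN] at hf ⊢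
        rw [Submodule.mem_bot] at hf ⊢
        rw [smul_eq_mul] at hf
        exact aux_step1 f hf
      · -- i = 1
        rw [isSMulRegular_quotient_iff_mem_of_smul_mem]
        intro f hf
        have hN : (Ideal.ofList (List.take 1 [x ^ 2, T₁, T₂]) •
            (⊤ : Submodule (MvPolynomial (Fin 4) k) (MvPolynomial (Fin 4) k)))
            = (Ideal.span {x ^ 2} : Ideal (MvPolynomial (Fin 4) k)) := by
          rw [smul_eq_mul, Ideal.mul_top]
          show Ideal.ofList [x ^ 2] = _
          rw [Ideal.ofList_singleton]
        rw [hN] at hf ⊢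
        rw [smul_eq_mul] at hf
        exact aux_step2 a f hf
      · -- i = 2
        rw [isSMulRegular_quotient_iff_mem_of_smul_mem]
        intro f hf
        have hN : (Ideal.ofList (List.take 2 [x ^ 2, T₁, T₂]) •
            (⊤ : Submodule (MvPolynomial (Fin 4) k) (MvPolynomial (Fin 4) k)))
            = (Ideal.span {x ^ 2, T₁} : Ideal (MvPolynomial (Fin 4) k)) := by
          rw [smul_eq_mul, Ideal.mul_top]
          show Ideal.ofList [x ^ 2, T₁] = _
          unfold Ideal.ofList
          congr 1
          ext r
          simp
        rw [hN] at hf ⊢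
        rw [smul_eq_mul] at hf
        exact aux_step3 a f hf
    · -- quotient nonzero
      intro htop
      rw [smul_eq_mul, Ideal.mul_top] at htop
      have h1 : (1 : MvPolynomial (Fin 4) k) ∈ Ideal.ofList [x ^ 2, T₁, T₂] := by
        rw [← htop]; trivial
      have hle : Ideal.ofList [x ^ 2, T₁, T₂] ≤
          RingHom.ker (constantCoeff : MvPolynomial (Fin 4) k →+* k) := by
        rw [Ideal.ofList]
        rw [Ideal.span_le]
        rintro r hr
        simp only [Set.mem_setOf_eq, List.mem_cons, List.not_mem_nil, or_false] at hr
        rcases hr with rfl | rfl | rfl <;>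
          simp [RingHom.mem_ker, T₁, T₂, x, y, z, w]
      have := hle h1
      rw [RingHom.mem_ker, map_one] at this
      exact one_ne_zero this
  · intro r hr
    simp only [List.mem_cons, List.not_mem_nil, or_false] at hr
    rcases hr with rfl | rfl | rfl <;> (apply Ideal.subset_span; simp)
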